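/- Let R be a commutative ring, S a multiplicative set, and M, N R-modules with M finitely presented. Then Hom_{S⁻¹R}(S⁻¹M, S⁻¹N) ≅ S⁻¹ Hom_R(M, N) as S⁻¹R-modules. -/
import Mathlib

theorem hom_localization_equiv {R : Type*} [CommRing R] (S : Submonoid R)
    (M N : Type*) [AddCommGroup M] [Module R M] [AddCommGroup N] [Module R N]
    [Module.FinitePresentation R M] :
    Nonempty ((LocalizedModule S (M →ₗ[R] N)) ≃ₗ[Localization S]
      ((LocalizedModule S M) →ₗ[Localization S] (LocalizedModule S N))) := by
  have h : IsLocalizedModule S (LocalizedModule.map S (M := M) (N := N)) := by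
    unfold LocalizedModule.map IsLocalizedModule.mapExtendScalars
    infer_instance
  let e := IsLocalizedModule.iso S (LocalizedModule.map S (M := M) (N := N))
  exact ⟨LinearEquiv.ofLinear
    (e.toLinearMap.extendScalarsOfIsLocalization S (Localization S))
    (e.symm.toLinearMap.extendScalarsOfIsLocalization S (Localization S))
    (by ext x; simp) (by ext x; simp)⟩
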